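/- Let n ≥ 1 and for each i let M_i^0, M_i^1, ..., M_i^{m_i} be integers with 0 ≤ M_i^0 < M_i^1 < ... < M_i^{m_i} ≤ T_0 (these are message birthdays, m_i = |M_i| ≥ 1). Let S be any assignment of distinct completion times S(i,j) ∈ {T_0+1,...,T_0+T} (T = Σ m_i) with S(i,1) < ... < S(i,m_i). Define Age(S) = Σ_i Σ_{t=T_0}^{T_0+T} age(S,i,t), where age(S,i,t) = t − b(lm(S,i,t)) if the latest message received by receiver i at or before t is not the last message M_i^{m_i}, and 0 otherwise (with lm(S,i,t)=M_i^0 if no message received by time t). Then Age(S) = Σ_i Σ_{j=1}^{m_i−1} (b(M_i^j) − b(M_i^{j−1}))(S(i,j) − T_0) + Σ_i (T_0 − b(M_i^{m_i−1}))(S(i,m_i) − T_0) + Σ_i [ (S(i,m_i) − T_0)^2/2 − (S(i,m_i) − T_0)/2 ]. -/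

import Mathlib

/-- Indices of messages of a pair (with `m` messages, completion times `S`)
received at or before time `t`. -/
def received (m : ℕ) (S : ℕ → ℤ) (t : ℤ) : Finset ℕ :=
  (Finset.Icc 1 m).filter (fun j => S j ≤ t)

/-- Index of the latest message received at or before time `t`
(`0`, i.e. the initial message, if none has been received). -/
noncomputable def lm (m : ℕ) (S : ℕ → ℤ) (t : ℤ) : ℕ :=
  if h : (received m S t).Nonempty then (received m S t).max' h else 0

/-- Age of a receiver at time `t`: `t` minus the birthday of the latest
received message, except `0` once the last message (index `m`) is received. -/
noncomputable def age (m : ℕ) (b : ℕ → ℤ) (S : ℕ → ℤ) (t : ℤ) : ℤ :=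
  if lm m S t = m then 0 else t - b (lm m S t)

lemma tele (B : ℕ → ℤ) : ∀ L, ∑ j ∈ Finset.Icc 1 L, (B j - B (j-1)) = B L - B 0 := by
  intro L
  induction L with
  | zero => simp
  | succ L ih =>
      rw [Finset.sum_Icc_succ_top (by omega), ih]
      simp

lemma mono_of_ord (M : ℕ) (σ : ℕ → ℤ) (hord : ∀ j, 1 ≤ j → j < M → σ j < σ (j+1)) :
    ∀ j k, 1 ≤ j → j ≤ k → k ≤ M → σ j ≤ σ k := by
  intro j k hj hjk hkM
  induction k with
  | zero => omega
  | succ k ih =>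
      rcases Nat.lt_or_ge j (k+1) with h | h
      · have h1 : σ j ≤ σ k := ih (by omega) (by omega)
        have h2 : σ k < σ (k+1) := hord k (by omega) (by omega)
        linarith
      · have : j = k + 1 := by omega
        rw [this]

lemma gauss (B0 T0 : ℤ) : ∀ c, T0 ≤ c →
    ∑ t ∈ Finset.Ico T0 c, (t - B0)
      = (c - T0) * (T0 - B0) + (c - T0) * (c - T0 - 1) / 2 := by
  intro c
  refine Int.le_induction (motive := fun c _ => ∑ t ∈ Finset.Ico T0 c, (t - B0)
      = (c - T0) * (T0 - B0) + (c - T0) * (c - T0 - 1) / 2) ?_ ?_ c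
  · simp
  · intro c hc ih
    have hins : Finset.Ico T0 (c+1) = insert c (Finset.Ico T0 c) := by
        ext x; simp [Finset.mem_Ico, Finset.mem_insert]; omega
    rw [hins, Finset.sum_insert (by simp [Finset.mem_Ico]), ih]
    obtain ⟨k, hk⟩ := Int.even_mul_succ_self (c - T0 - 1)
    have h1 : (c - T0) * (c - T0 - 1) = 2 * k := by linear_combination hk
    have h2 : (c + 1 - T0) * (c + 1 - T0 - 1) = 2 * (k + (c - T0)) := by
      linear_combination hk
    rw [h1, h2, Int.mul_ediv_cancel_left _ two_ne_zero,
      Int.mul_ediv_cancel_left _ two_ne_zero]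
    ring

lemma pointwise (M : ℕ) (B σ : ℕ → ℤ) (hM : 1 ≤ M)
    (hmono : ∀ j k, 1 ≤ j → j ≤ k → k ≤ M → σ j ≤ σ k) (t : ℤ) :
    age M B σ t = if σ M ≤ t then 0 else
      (t - B 0) - ∑ j ∈ Finset.Icc 1 (M-1), (B j - B (j-1)) * (if σ j ≤ t then 1 else 0) := by
  by_cases h : σ M ≤ t
  · have hMmem : M ∈ received M σ t := by
      simp [received, Finset.mem_filter, Finset.mem_Icc, hM, h]
    have hlm : lm M σ t = M := by
      rw [lm, dif_pos ⟨M, hMmem⟩]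
      refine le_antisymm ?_ (Finset.le_max' _ M hMmem)
      have hmem := Finset.max'_mem (received M σ t) ⟨M, hMmem⟩
      simp only [received, Finset.mem_filter, Finset.mem_Icc] at hmem
      exact hmem.1.2
    simp [age, hlm, h]
  · set L := lm M σ t with hLdef
    have hiff : ∀ j, 1 ≤ j → j ≤ M → (σ j ≤ t ↔ j ≤ L) := by
      intro j hj hjM
      by_cases hne : (received M σ t).Nonempty
      · have hLeq : L = (received M σ t).max' hne := by rw [hLdef, lm, dif_pos hne]
        have hLmem := Finset.max'_mem (received M σ t) hne
        rw [← hLeq] at hLmem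
        simp only [received, Finset.mem_filter, Finset.mem_Icc] at hLmem
        constructor
        · intro hjt
          have : j ∈ received M σ t := by
            simp [received, Finset.mem_filter, Finset.mem_Icc, hj, hjM, hjt]
          rw [hLeq]; exact Finset.le_max' _ j this
        · intro hjL
          exact le_trans (hmono j L hj hjL hLmem.1.2) hLmem.2
      · have hL0 : L = 0 := by rw [hLdef, lm, dif_neg hne]
        constructor
        · intro hjt
          exact absurd ⟨j, by simp [received, Finset.mem_filter, Finset.mem_Icc, hj, hjM, hjt]⟩ hne
        · intro hjL; omega
    have hLM : L ≤ M - 1 := by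
      by_cases hne : (received M σ t).Nonempty
      · have hLeq : L = (received M σ t).max' hne := by rw [hLdef, lm, dif_pos hne]
        have hLmem := Finset.max'_mem (received M σ t) hne
        rw [← hLeq] at hLmem
        simp only [received, Finset.mem_filter, Finset.mem_Icc] at hLmem
        have : L ≠ M := by
          intro hEq
          exact h (by rw [← hEq]; exact hLmem.2)
        omega
      · have hL0 : L = 0 := by rw [hLdef, lm, dif_neg hne]
        omega
    have hage : age M B σ t = t - B L := by
      rw [age, if_neg]
      intro hEq
      exact h ((hiff M hM le_rfl).mpr (by omega))
    rw [if_neg h, hage]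
    have hfilter : (Finset.Icc 1 (M-1)).filter (fun j => σ j ≤ t) = Finset.Icc 1 L := by
      ext j
      simp only [Finset.mem_filter, Finset.mem_Icc]
      constructor
      · rintro ⟨⟨h1, h2⟩, h3⟩
        exact ⟨h1, (hiff j h1 (by omega)).mp h3⟩
      · rintro ⟨h1, h2⟩
        exact ⟨⟨h1, by omega⟩, (hiff j h1 (by omega)).mpr h2⟩
    have hsum : ∑ j ∈ Finset.Icc 1 (M-1), (B j - B (j-1)) * (if σ j ≤ t then 1 else 0)
        = ∑ j ∈ Finset.Icc 1 L, (B j - B (j-1)) := by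
      simp only [mul_ite, mul_one, mul_zero]
      rw [← Finset.sum_filter, hfilter]
    rw [hsum, tele]
    ring

lemma pair (M : ℕ) (B σ : ℕ → ℤ) (T0 : ℤ) (T : ℕ) (hM : 1 ≤ M)
    (hrange : ∀ j, 1 ≤ j → j ≤ M → T0 + 1 ≤ σ j ∧ σ j ≤ T0 + T)
    (hord : ∀ j, 1 ≤ j → j < M → σ j < σ (j+1)) :
    ∑ t ∈ Finset.Icc T0 (T0 + T), age M B σ t
      = (∑ j ∈ Finset.Icc 1 (M - 1), (B j - B (j-1)) * (σ j - T0))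
        + (T0 - B (M - 1)) * (σ M - T0)
        + ((σ M - T0) ^ 2 / 2 - (σ M - T0) / 2) := by
  have hmono := mono_of_ord M σ hord
  have hc1 : T0 + 1 ≤ σ M := (hrange M hM le_rfl).1
  have hc2 : σ M ≤ T0 + T := (hrange M hM le_rfl).2
  -- split the time interval
  have hsplit : Finset.Icc T0 (T0 + T) = Finset.Ico T0 (σ M) ∪ Finset.Icc (σ M) (T0 + T) := by
    ext x; simp only [Finset.mem_Icc, Finset.mem_Ico, Finset.mem_union]; omega
  have hdisj : Disjoint (Finset.Ico T0 (σ M)) (Finset.Icc (σ M) (T0 + T)) := by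
    rw [Finset.disjoint_left]
    intro x hx hx'
    simp only [Finset.mem_Ico] at hx
    simp only [Finset.mem_Icc] at hx'
    omega
  rw [hsplit, Finset.sum_union hdisj]
  have hzero : ∑ t ∈ Finset.Icc (σ M) (T0 + T), age M B σ t = 0 := by
    apply Finset.sum_eq_zero
    intro t ht
    simp only [Finset.mem_Icc] at ht
    rw [pointwise M B σ hM hmono t, if_pos ht.1]
  rw [hzero, add_zero]
  have hmain : ∑ t ∈ Finset.Ico T0 (σ M), age M B σ t
      = (∑ t ∈ Finset.Ico T0 (σ M), (t - B 0))
        - ∑ j ∈ Finset.Icc 1 (M-1), (B j - B (j-1)) * (σ M - σ j) := by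
    have step1 : ∀ t ∈ Finset.Ico T0 (σ M), age M B σ t
        = (t - B 0) - ∑ j ∈ Finset.Icc 1 (M-1), (B j - B (j-1)) * (if σ j ≤ t then 1 else 0) := by
      intro t ht
      simp only [Finset.mem_Ico] at ht
      rw [pointwise M B σ hM hmono t, if_neg (by omega)]
    rw [Finset.sum_congr rfl step1, Finset.sum_sub_distrib]
    congr 1
    rw [Finset.sum_comm]
    apply Finset.sum_congr rfl
    intro j hj
    simp only [Finset.mem_Icc] at hj
    rw [← Finset.mul_sum]
    congr 1
    have hj1 : T0 + 1 ≤ σ j := (hrange j hj.1 (by omega)).1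
    have hj2 : σ j ≤ σ M := hmono j M hj.1 (by omega) le_rfl
    have hfilt : (Finset.Ico T0 (σ M)).filter (fun t => σ j ≤ t) = Finset.Ico (σ j) (σ M) := by
      ext x; simp only [Finset.mem_filter, Finset.mem_Ico]; omega
    rw [Finset.sum_boole, hfilt, Int.card_Ico]
    exact Int.toNat_of_nonneg (by omega)
  rw [hmain, gauss (B 0) T0 (σ M) (by omega)]
  set d := σ M - T0 with hd
  obtain ⟨k, hk⟩ := Int.even_mul_succ_self (d - 1)
  have h1 : d * (d - 1) = 2 * k := by linear_combination hk
  have h2 : d ^ 2 = 2 * k + d := by linear_combination hk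
  have hdiv : d ^ 2 / 2 - d / 2 = d * (d - 1) / 2 := by
    rw [h1, h2]; omega
  rw [hdiv]
  have key : (∑ j ∈ Finset.Icc 1 (M-1), (B j - B (j-1)) * (σ M - σ j))
      + (∑ j ∈ Finset.Icc 1 (M-1), (B j - B (j-1)) * (σ j - T0))
      = (B (M-1) - B 0) * d := by
    rw [← Finset.sum_add_distrib]
    have hterm : ∀ j ∈ Finset.Icc 1 (M-1),
        (B j - B (j-1)) * (σ M - σ j) + (B j - B (j-1)) * (σ j - T0)
          = (B j - B (j-1)) * d := by
      intro j _
      rw [← mul_add]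
      congr 1
      omega
    rw [Finset.sum_congr rfl hterm, ← Finset.sum_mul, tele]
  set E := d * (d - 1) / 2 with hE
  linear_combination -key

theorem minAge_geometric_identity
    (n : ℕ) (hn : 1 ≤ n) (m : Fin n → ℕ) (hm : ∀ i, 1 ≤ m i)
    (b : Fin n → ℕ → ℤ) (T0 : ℤ)
    (hb0 : ∀ i, 0 ≤ b i 0)
    (hbmono : ∀ i, ∀ j < m i, b i j < b i (j + 1))
    (hbT0 : ∀ i, b i (m i) ≤ T0)
    (T : ℕ) (hT : T = ∑ i, m i)
    (S : Fin n → ℕ → ℤ)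
    (hrange : ∀ i j, 1 ≤ j → j ≤ m i → S i j ∈ Finset.Icc (T0 + 1) (T0 + T))
    (hinj : ∀ i j i' j', 1 ≤ j → j ≤ m i → 1 ≤ j' → j' ≤ m i' →
      S i j = S i' j' → i = i' ∧ j = j')
    (hord : ∀ i j, 1 ≤ j → j < m i → S i j < S i (j + 1)) :
    ∑ i, ∑ t ∈ Finset.Icc T0 (T0 + T), age (m i) (b i) (S i) t
      = (∑ i, ∑ j ∈ Finset.Icc 1 (m i - 1), (b i j - b i (j - 1)) * (S i j - T0))
        + (∑ i, (T0 - b i (m i - 1)) * (S i (m i) - T0))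
        + (∑ i, ((S i (m i) - T0) ^ 2 / 2 - (S i (m i) - T0) / 2)) := by
  rw [← Finset.sum_add_distrib, ← Finset.sum_add_distrib]
  apply Finset.sum_congr rfl
  intro i _
  refine pair (m i) (b i) (S i) T0 T (hm i) ?_ (hord i)
  intro j hj1 hj2
  have := hrange i j hj1 hj2
  simpa [Finset.mem_Icc] using this
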